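/- arXiv:1603.03068 — 8 statements merged into one kernel-verified Lean document; each statement's English description precedes it below -/
import Mathlib

section
/- Let A be a finite subset of an additive group G with φ(A) = 1, and suppose there exists a nonzero a ∈ A with 2a ∈ A. Then A is a subgroup of G. -/
/-- `phi A` is the maximum cardinality of a subset `B ⊆ A` that is sum-avoiding in `A`. -/
def phi {G : Type*} [AddCommGroup G] [DecidableEq G] (A : Finset G) : ℕ :=
  ((A.powerset).filter (fun B => ∀ b₁ ∈ B, ∀ b₂ ∈ B, b₁ ≠ b₂ → b₁ + b₂ ∉ A)).sup Finset.card

theorem phi_one_with_doubling_is_subgroup {G : Type*} [AddCommGroup G] [DecidableEq G]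
    (A : Finset G) (hphi : phi A = 1)
    (a : G) (ha : a ∈ A) (ha0 : a ≠ 0) (h2a : 2 • a ∈ A) :
    ∃ H : AddSubgroup G, ∀ x, x ∈ A ↔ x ∈ H := by
  -- Key property: sums of distinct elements of A belong to A.
  have P : ∀ b₁ ∈ A, ∀ b₂ ∈ A, b₁ ≠ b₂ → b₁ + b₂ ∈ A := by
    intro b₁ hb₁ b₂ hb₂ hne
    by_contra hns
    have hmem : ({b₁, b₂} : Finset G) ∈ (A.powerset).filter
        (fun B => ∀ c₁ ∈ B, ∀ c₂ ∈ B, c₁ ≠ c₂ → c₁ + c₂ ∉ A) := by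
      simp only [Finset.mem_filter, Finset.mem_powerset]
      refine ⟨?_, ?_⟩
      · intro x hx
        simp only [Finset.mem_insert, Finset.mem_singleton] at hx
        rcases hx with h | h <;> subst h <;> assumption
      · intro c₁ hc₁ c₂ hc₂ hcne
        simp only [Finset.mem_insert, Finset.mem_singleton] at hc₁ hc₂
        rcases hc₁ with h1 | h1 <;> rcases hc₂ with h2 | h2 <;> subst h1 <;> subst h2
        · exact absurd rfl hcne
        · exact hns
        · rw [add_comm]; exact hns
        · exact absurd rfl hcne
    have hle := Finset.le_sup (f := Finset.card) hmem
    have hcard : ({b₁, b₂} : Finset G).card = 2 := Finset.card_pair hne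
    unfold phi at hphi
    rw [hphi, hcard] at hle
    omega
  -- All positive multiples of an element with doubling lie in A.
  have hmul : ∀ x ∈ A, 2 • x ∈ A → ∀ n : ℕ, 1 ≤ n → n • x ∈ A := by
    intro x hx h2x n hn
    induction n with
    | zero => omega
    | succ m ih =>
      rcases Nat.lt_or_ge m 1 with h | h
      · interval_cases m
        simpa using hx
      · have hm : m • x ∈ A := ih h
        by_cases he : m • x = x
        · have : (m + 1) • x = 2 • x := by rw [succ_nsmul, he, two_nsmul]
          rw [this]; exact h2x
        · have := P (m • x) hm x hx he
          rwa [← succ_nsmul] at this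
  -- Any element with doubling has finite order.
  have horder : ∀ x ∈ A, 2 • x ∈ A → ∃ d : ℕ, 1 ≤ d ∧ d • x = 0 := by
    intro x hx h2x
    have hmaps : ∀ n : ℕ, (n + 1) • x ∈ A := fun n => hmul x hx h2x (n + 1) (by omega)
    have hni : ¬ Function.Injective (fun n : ℕ => (⟨(n + 1) • x, hmaps n⟩ : {y // y ∈ A})) := by
      intro hinj
      exact Set.infinite_range_of_injective hinj (Set.toFinite _)
    rw [Function.not_injective_iff] at hni
    obtain ⟨n, m, heq, hne⟩ := hni
    have heq' : (n + 1) • x = (m + 1) • x := congrArg Subtype.val heq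
    rcases Nat.lt_or_ge n m with h | h
    · refine ⟨m - n, by omega, ?_⟩
      have hsplit : (m + 1) • x = (m - n) • x + (n + 1) • x := by
        rw [← add_nsmul]; congr 1; omega
      rw [hsplit] at heq'
      exact add_eq_right.mp heq'.symm
    · refine ⟨n - m, by omega, ?_⟩
      have hsplit : (n + 1) • x = (n - m) • x + (m + 1) • x := by
        rw [← add_nsmul]; congr 1; omega
      rw [hsplit] at heq'
      exact add_eq_right.mp heq'
  obtain ⟨d, hd1, hda⟩ := horder a ha h2a
  have h0A : (0 : G) ∈ A := by
    have := hmul a ha h2a d hd1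
    rwa [hda] at this
  -- Negatives of elements with doubling lie in A.
  have hneg : ∀ x ∈ A, 2 • x ∈ A → -x ∈ A := by
    intro x hx h2x
    obtain ⟨e, he1, hex⟩ := horder x hx h2x
    rcases Nat.lt_or_ge e 2 with h | h
    · interval_cases e
      simp only [one_nsmul] at hex
      rw [hex]
      simpa using h0A
    · have h1 : (e - 1) • x ∈ A := hmul x hx h2x (e - 1) (by omega)
      have heq : (e - 1) • x = -x := by
        apply eq_neg_of_add_eq_zero_left
        rw [← succ_nsmul, show e - 1 + 1 = e by omega, hex]
      rwa [heq] at h1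
  have hnega : -a ∈ A := hneg a ha h2a
  -- Doubling holds for every element of A.
  have hdbl : ∀ x ∈ A, x + x ∈ A := by
    intro x hx
    by_cases hx0 : x + x = 0
    · rw [hx0]; exact h0A
    by_cases hxa : x = a
    · subst hxa; rwa [two_nsmul] at h2a
    by_cases h2xna : x + x = -(2 • a)
    · have h4a : (2 : ℕ) • 2 • a ∈ A := by
        have h := hmul a ha h2a 4 (by omega)
        rwa [show (4 : ℕ) = 2 * 2 from rfl, mul_smul] at h
      have := hneg (2 • a) h2a h4a
      rwa [← h2xna] at this
    · have h1 : x + a ∈ A := P x hx a ha hxa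
      have h2 : (x + a) + x ∈ A := by
        refine P (x + a) h1 x hx ?_
        intro hcon
        apply ha0
        have hh : a = (x + a) - x := by abel
        rw [hcon, sub_self] at hh
        exact hh
      have h3 : ((x + a) + x) + -a ∈ A := by
        refine P _ h2 (-a) hnega ?_
        intro hcon
        apply h2xna
        have hxx : x + x = ((x + a) + x) + -a := by abel
        rw [hcon] at hxx
        rw [hxx, two_nsmul, neg_add]
      have heq : ((x + a) + x) + -a = x + x := by abel
      rwa [heq] at h3
  refine ⟨{ carrier := ↑A,
            add_mem' := ?_,
            zero_mem' := h0A,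
            neg_mem' := ?_ }, fun x => Iff.rfl⟩
  · intro x y hxm hym
    simp only [Finset.mem_coe] at *
    by_cases hxy : x = y
    · subst hxy; exact hdbl x hxm
    · exact P x hxm y hym hxy
  · intro x hxm
    simp only [Finset.mem_coe] at *
    refine hneg x hxm ?_
    rw [two_nsmul]
    exact hdbl x hxm
end

section
/- Let A be a finite subset of an additive group G with φ(A) = 1. Then one of the following holds: (1) A is a subgroup of G; (2) A = H \ {0} for some 2-torsion subgroup H of G; (3) A = {b} for some b ∈ G; (4) A = {b, 0} for some b ∈ G; (5) A = {b, 0, −b} for some b ∈ G. -/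
open Finset AddSubgroup

section Aux

variable {G : Type*} [AddCommGroup G] [DecidableEq G]

lemma aux_missing (A : Finset G) (hP : ∀ a ∈ A, ∀ b ∈ A, a ≠ b → a + b ∈ A)
    {a : G} (ha : a ∈ A) :
    (2 - (A.card : ℤ)) • a ∈ A ∧
      ∀ x ∈ A, x ≠ (2 - (A.card : ℤ)) • a → x - a ∈ A := by
  classical
  set n := A.card with hn
  set I : Finset G := (A.erase a).image (fun y => a + y) with hI
  have hIA : I ⊆ A := by
    intro x hx
    simp only [hI, mem_image] at hx
    obtain ⟨y, hy, rfl⟩ := hx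
    exact hP a ha y (mem_of_mem_erase hy) (Ne.symm (ne_of_mem_erase hy))
  have hIcard : I.card = n - 1 := by
    rw [hI, card_image_of_injective _ (add_right_injective a), card_erase_of_mem ha]
  have hn1 : 1 ≤ n := card_pos.2 ⟨a, ha⟩
  have hDcard : (A \ I).card = 1 := by
    rw [card_sdiff_of_subset hIA, hIcard]
    omega
  obtain ⟨μ, hμ⟩ := card_eq_one.1 hDcard
  have hsum : ∑ x ∈ A \ I, x + ∑ x ∈ I, x = ∑ x ∈ A, x := sum_sdiff hIA
  have hsumI : ∑ x ∈ I, x = (n - 1) • a + (∑ x ∈ A, x - a) := by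
    rw [hI, sum_image (fun x _ y _ h => add_right_injective a h)]
    rw [sum_add_distrib, sum_const, card_erase_of_mem ha, sum_erase_eq_sub ha]
  have hμval : μ = a - (n - 1) • a := by
    have h := hsum
    rw [hμ, sum_singleton, hsumI] at h
    set v := (n - 1) • a with hv
    set σ := ∑ x ∈ A, x with hσ
    have : μ + (v + (σ - a)) = σ := h
    have h2 : μ = σ - (v + (σ - a)) := eq_sub_of_add_eq this
    rw [h2]; abel
  have hcast : a - (n - 1) • a = (2 - (n : ℤ)) • a := by
    have : (2 - (n : ℤ)) = 1 - ((n : ℤ) - 1) := by ring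
    rw [this, sub_zsmul, one_zsmul]
    have : ((n : ℤ) - 1) = ((n - 1 : ℕ) : ℤ) := by omega
    rw [this, natCast_zsmul]; abel
  have hμA : μ ∈ A := by
    have : μ ∈ A \ I := hμ ▸ mem_singleton_self μ
    exact (mem_sdiff.1 this).1
  constructor
  · rwa [← hcast, ← hμval]
  · intro x hx hxne
    have hxI : x ∈ I := by
      by_contra hxI
      have : x ∈ A \ I := mem_sdiff.2 ⟨hx, hxI⟩
      rw [hμ, mem_singleton] at this
      exact hxne (this.trans (hμval.trans hcast))
    simp only [hI, mem_image] at hxI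
    obtain ⟨y, hy, rfl⟩ := hxI
    simpa using mem_of_mem_erase hy

lemma aux_finord (A : Finset G) (hP : ∀ a ∈ A, ∀ b ∈ A, a ≠ b → a + b ∈ A)
    (hcard : 4 ≤ A.card) {a : G} (ha : a ∈ A) : IsOfFinAddOrder a := by
  set c : ℤ := 2 - (A.card : ℤ) with hc
  have hc2 : c ≤ -2 := by simp only [hc]; omega
  have hchain : ∀ k : ℕ, c ^ k • a ∈ A := by
    intro k
    induction k with
    | zero => simpa using ha
    | succ k ih =>
      have := (aux_missing A hP ih).1
      rwa [← hc, smul_smul, ← pow_succ'] at this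
  obtain ⟨k, hk, l, hl, hkl, hfkl⟩ :=
    exists_ne_map_eq_of_card_lt_of_maps_to (s := range (A.card + 1)) (t := A)
      (by simp) (fun k _ => hchain k)
  have hne : c ^ k ≠ c ^ l := by
    intro h
    rcases hkl.lt_or_gt with h' | h' <;>
    · have habs : (1:ℤ) < |c| := by rcases abs_cases c with ⟨h1,h2⟩|⟨h1,h2⟩ <;> omega
      have := pow_lt_pow_right₀ habs h'
      rw [← abs_pow, ← abs_pow, h] at this
      omega
  have hz : (c ^ k - c ^ l) • a = 0 := by
    rw [sub_smul, hfkl, sub_self]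
  rw [isOfFinAddOrder_iff_nsmul_eq_zero]
  refine ⟨(c ^ k - c ^ l).natAbs, by
    simp only [Int.natAbs_pos]; exact sub_ne_zero.2 hne, ?_⟩
  rcases Int.natAbs_eq (c ^ k - c ^ l) with h | h
  · rw [← natCast_zsmul, ← h, hz]
  · rw [← natCast_zsmul, ← neg_neg ((Int.natAbs _ : ℤ)), ← h, neg_zsmul, hz, neg_zero]

lemma aux_coset (A : Finset G) (hP : ∀ a ∈ A, ∀ b ∈ A, a ≠ b → a + b ∈ A)
    {a b : G} (ha : a ∈ A) (hfa : IsOfFinAddOrder a) (hb : b ∈ A)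
    (hbK : b ∉ zmultiples a) : ∀ j : ℤ, b + j • a ∈ A := by
  have hup : ∀ k : ℕ, b + k • a ∈ A := by
    intro k
    induction k with
    | zero => simpa using hb
    | succ k ih =>
      have hne : b + k • a ≠ a := by
        intro h
        refine hbK ⟨1 - (k : ℤ), ?_⟩
        show (1 - (k : ℤ)) • a = b
        rw [sub_zsmul, one_zsmul, natCast_zsmul, eq_sub_of_add_eq h]; abel
      have := hP _ ih _ ha hne
      rwa [add_assoc, ← succ_nsmul] at this
  intro j
  set m := addOrderOf a with hm
  have hm0 : 0 < m := hfa.addOrderOf_pos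
  have hjk : j • a = ((j % (m : ℤ)).toNat : ℕ) • a := by
    rw [← natCast_zsmul]
    have hnn : (0:ℤ) ≤ j % (m:ℤ) := Int.emod_nonneg j (by exact_mod_cast hm0.ne')
    rw [Int.toNat_of_nonneg hnn]
    have : (m : ℤ) ∣ (j - j % (m:ℤ)) := Int.dvd_self_sub_of_emod_eq rfl
    have hz := addOrderOf_dvd_iff_zsmul_eq_zero.1 (hm ▸ this)
    rw [sub_smul] at hz
    exact sub_eq_zero.1 hz
  rw [hjk]
  exact hup _

lemma aux_Y (A : Finset G) (hP : ∀ a ∈ A, ∀ b ∈ A, a ≠ b → a + b ∈ A)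
    {a b : G} (ha : a ∈ A) (hfa : IsOfFinAddOrder a) (hm3 : 3 ≤ addOrderOf a)
    (hb : b ∈ A) (hfb : IsOfFinAddOrder b) (hbK : b ∉ zmultiples a) :
    ∀ j : ℤ, j • a ∈ A := by
  have h2a : (2 : ℤ) • a ≠ 0 := by
    intro h
    have hdvd : (addOrderOf a : ℤ) ∣ 2 := addOrderOf_dvd_iff_zsmul_eq_zero.2 h
    have := Int.le_of_dvd (by norm_num) hdvd
    omega
  -- minimal r ≥ 1 with r • b ∈ zmultiples a
  have hex : ∃ s : ℕ, 0 < s ∧ (s : ℤ) • b ∈ zmultiples a := by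
    refine ⟨addOrderOf b, hfb.addOrderOf_pos, ?_⟩
    rw [natCast_zsmul, addOrderOf_nsmul_eq_zero]
    exact zero_mem _
  classical
  obtain ⟨r, ⟨hr0, hrK⟩, hrmin⟩ :
      ∃ r : ℕ, (0 < r ∧ (r : ℤ) • b ∈ zmultiples a) ∧
        ∀ s, s < r → ¬(0 < s ∧ (s : ℤ) • b ∈ zmultiples a) :=
    ⟨Nat.find hex, Nat.find_spec hex, fun s hs => Nat.find_min hex hs⟩
  have hr2 : 2 ≤ r := by
    rcases Nat.lt_or_ge r 2 with h | h
    · exfalso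
      have hr1 : r = 1 := by omega
      subst hr1
      apply hbK; simpa using hrK
    · exact h
  -- main induction
  have main : ∀ s : ℕ, 1 ≤ s → s ≤ r → ∀ j : ℤ, (s : ℤ) • b + j • a ∈ A := by
    intro s hs1
    induction s, hs1 using Nat.le_induction with
    | base =>
      intro _ j
      simpa using aux_coset A hP ha hfa hb hbK j
    | succ s hs1 ih =>
      intro hsr j
      have ihs := ih (by omega)
      rcases eq_or_lt_of_le hs1 with h1 | h2
      · -- s = 1 : need k, l with k + l = j and k • a ≠ l • a
        subst h1
        rcases eq_or_ne ((0:ℤ) • a) (j • a) with h0 | h0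
        · -- j • a = 0, use k = 1, l = j - 1
          have hx := aux_coset A hP ha hfa hb hbK 1
          have hy := aux_coset A hP ha hfa hb hbK (j - 1)
          have hne : b + (1:ℤ) • a ≠ b + (j - 1) • a := by
            intro h
            apply h2a
            have : (1:ℤ) • a = (j-1) • a := add_left_cancel h
            have h3 : ((1:ℤ) - (j-1)) • a = 0 := by rw [sub_smul, this, sub_self]
            have h4 : ((2:ℤ) - j) • a = 0 := by convert h3 using 2; ring
            rw [sub_smul] at h4
            rw [two_zsmul] at *
            rw [← h0] at h4
            simpa using h4
          have := hP _ hx _ hy hne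
          have heq : (b + (1:ℤ) • a) + (b + (j - 1) • a) = ((1:ℕ)+1 : ℤ) • b + j • a := by
            push_cast
            rw [two_zsmul, sub_zsmul, one_zsmul]
            abel
          rwa [heq] at this
        · have hx := aux_coset A hP ha hfa hb hbK 0
          have hy := aux_coset A hP ha hfa hb hbK j
          have hne : b + (0:ℤ) • a ≠ b + j • a := by
            intro h; exact h0 (add_left_cancel h)
          have := hP _ hx _ hy hne
          have heq : (b + (0:ℤ) • a) + (b + j • a) = ((1:ℕ)+1 : ℤ) • b + j • a := by
            push_cast; rw [two_zsmul, zero_zsmul]; abel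
          rwa [heq] at this
      · -- s ≥ 2
        have hx := aux_coset A hP ha hfa hb hbK 0
        have hy := ihs j
        have hne : b + (0:ℤ) • a ≠ (s : ℤ) • b + j • a := by
          intro h
          rw [zero_zsmul, add_zero] at h
          have hsbm : ((s - 1 : ℕ) : ℤ) • b ∈ zmultiples a := by
            refine ⟨-j, ?_⟩
            have h' : j • a = b - (s : ℤ) • b := eq_sub_of_add_eq' h.symm
            show (-j) • a = ((s - 1 : ℕ) : ℤ) • b
            have hs1' : ((s - 1 : ℕ) : ℤ) = (s : ℤ) - 1 := by omega
            rw [hs1', sub_zsmul, one_zsmul, neg_zsmul, h']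
            abel
          exact hrmin (s - 1) (by omega) ⟨by omega, hsbm⟩
        have := hP _ hx _ hy hne
        have heq : (b + (0:ℤ) • a) + ((s:ℤ) • b + j • a) = ((s:ℕ)+1 : ℤ) • b + j • a := by
          push_cast
          rw [add_zsmul, one_zsmul, zero_zsmul]
          abel
        rwa [heq] at this
  -- conclude
  obtain ⟨c, hc⟩ := hrK
  intro j
  have := main r (by omega) le_rfl (j - c)
  rw [← hc] at this
  have heq : (c : ℤ) • a + (j - c) • a = j • a := by rw [← add_zsmul]; ring_nf
  rwa [heq] at this

lemma aux_X (A : Finset G) (hP : ∀ a ∈ A, ∀ b ∈ A, a ≠ b → a + b ∈ A)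
    (hcard : 4 ≤ A.card) {a : G} (ha : a ∈ A) (hfa : IsOfFinAddOrder a)
    (hsub : ∀ x ∈ A, x ∈ zmultiples a) :
    ∀ x, x ∈ A ↔ x ∈ zmultiples a := by
  classical
  set n := A.card with hn
  set m := addOrderOf a with hm
  have hm0 : 0 < m := hfa.addOrderOf_pos
  -- m ≥ n
  have hmn : n ≤ m := by
    have hfin : (zmultiples a : Set G).Finite := finite_zmultiples.2 hfa
    have h1 : (↑A : Set G) ⊆ (zmultiples a : Set G) := fun x hx => hsub x (by simpa using hx)
    have h2 := Set.ncard_le_ncard h1 hfin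
    rw [Set.ncard_coe_finset, ← Nat.card_coe_set_eq] at h2
    simp only [SetLike.coe_sort_coe] at h2
    rw [Nat.card_zmultiples] at h2
    exact h2
  -- dvd helper
  have hdvd : ∀ d : ℤ, d • a = 0 → 0 < d → d < (m:ℤ) → False := by
    intro d hd h1 h2
    have := addOrderOf_dvd_iff_zsmul_eq_zero.2 hd
    rw [← hm] at this
    have := Int.le_of_dvd h1 this
    omega
  -- the chain
  have hchain : ∀ k : ℕ, k ≤ n - 1 → (1 - (k:ℤ)) • a ∈ A := by
    intro k hk
    induction k with
    | zero => simpa using ha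
    | succ k ih =>
      have hkn : k ≤ n - 1 := by omega
      have hx := ih hkn
      have hxne : (1 - (k:ℤ)) • a ≠ (2 - (n:ℤ)) • a := by
        intro h
        have h3 : (((n:ℤ) - 1 - k)) • a = 0 := by
          have := sub_eq_zero.2 h
          rw [← sub_smul] at this
          convert this using 2
          ring
        exact hdvd _ h3 (by omega) (by omega)
      have := (aux_missing A hP ha).2 _ hx hxne
      have heq : (1 - (k:ℤ)) • a - a = (1 - ((k+1:ℕ):ℤ)) • a := by
        have hc : ((k+1:ℕ):ℤ) = (k:ℤ) + 1 := by push_cast; ring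
        rw [hc, sub_zsmul, sub_zsmul, one_zsmul, add_zsmul, one_zsmul]
        abel
      rwa [heq] at this
  -- the image finset
  set B : Finset G := (range n).image (fun k : ℕ => (1 - (k:ℤ)) • a) with hB
  have hBA : B ⊆ A := by
    intro x hx
    simp only [hB, mem_image, mem_range] at hx
    obtain ⟨k, hk, rfl⟩ := hx
    exact hchain k (by omega)
  have hinj : ∀ k ∈ range n, ∀ l ∈ range n,
      (1 - (k:ℤ)) • a = (1 - (l:ℤ)) • a → k = l := by
    intro k hk l hl h
    simp only [mem_range] at hk hl
    by_contra hne
    rcases Ne.lt_or_gt hne with h' | h'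
    · have h3 : ((l:ℤ) - k) • a = 0 := by
        have := sub_eq_zero.2 h
        rw [← sub_smul] at this
        convert this using 2
        ring
      exact hdvd _ h3 (by omega) (by omega)
    · have h3 : ((k:ℤ) - l) • a = 0 := by
        have := sub_eq_zero.2 h.symm
        rw [← sub_smul] at this
        convert this using 2
        ring
      exact hdvd _ h3 (by omega) (by omega)
  have hBcard : B.card = n := by
    rw [hB, card_image_of_injOn hinj, card_range]
  have hBeq : B = A := eq_of_subset_of_card_le hBA (by omega)
  -- rule out m > n
  have hmln : m = n := by
    by_contra hne
    have hmgt : n < m := by omega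
    have hu : (2 - (n:ℤ)) • a ∈ A := by
      have := hchain (n-1) le_rfl
      have heq : (1 - ((n-1:ℕ):ℤ)) = (2 - (n:ℤ)) := by omega
      rwa [heq] at this
    have hv : (-1 : ℤ) • a ∈ A := by
      have h6 := hchain 2 (by omega)
      norm_num at h6
      rwa [neg_one_zsmul]
    have huv : (2 - (n:ℤ)) • a ≠ (-1:ℤ) • a := by
      intro h
      have h3 : ((n:ℤ) - 3) • a = 0 := by
        have := sub_eq_zero.2 h.symm
        rw [← sub_smul] at this
        convert this using 2; ring
      exact hdvd _ h3 (by omega) (by omega)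
    have hw := hP _ hu _ hv huv
    have heq : (2 - (n:ℤ)) • a + (-1:ℤ) • a = (1 - (n:ℤ)) • a := by
      rw [← add_zsmul]; ring_nf
    rw [heq, ← hBeq] at hw
    simp only [hB, mem_image, mem_range] at hw
    obtain ⟨k, hk, hkeq⟩ := hw
    have h3 : ((n:ℤ) - k) • a = 0 := by
      have := sub_eq_zero.2 hkeq
      rw [← sub_smul] at this
      convert this using 2; ring
    exact hdvd _ h3 (by omega) (by omega)
  -- conclude
  intro x
  constructor
  · exact hsub x
  · intro hx
    obtain ⟨j, hj⟩ := hx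
    rw [← hBeq]
    simp only [hB, mem_image, mem_range]
    refine ⟨((1 - j) % (m:ℤ)).toNat, ?_, ?_⟩
    · have he1 := Int.emod_lt_of_pos (1-j) (show (0:ℤ) < m by exact_mod_cast hm0)
      have he2 := Int.emod_nonneg (1-j) (show (m:ℤ) ≠ 0 by exact_mod_cast hm0.ne')
      omega
    · have hnn := Int.emod_nonneg (1-j) (show (m:ℤ) ≠ 0 by exact_mod_cast hm0.ne')
      rw [Int.toNat_of_nonneg hnn]
      have hdd : (m:ℤ) ∣ ((1 - ((1-j) % (m:ℤ))) - j) := by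
        have : (m:ℤ) ∣ ((1-j) - (1-j) % (m:ℤ)) := Int.dvd_self_sub_of_emod_eq rfl
        convert this using 1; ring
      have hz : ((1 - (1-j) % (m:ℤ)) - j) • a = 0 := addOrderOf_dvd_iff_zsmul_eq_zero.1 hdd
      rw [sub_smul] at hz
      have h5 := sub_eq_zero.1 hz
      rw [h5]
      exact hj

/-- build the subgroup `A ∪ {0}` -/
def mkS (A : Finset G) (hP : ∀ a ∈ A, ∀ b ∈ A, a ≠ b → a + b ∈ A)
    (hi : ∀ a ∈ A, a + a ∈ insert (0:G) A) (hv : ∀ a ∈ A, -a ∈ insert (0:G) A) :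
    AddSubgroup G where
  carrier := ↑(insert (0:G) A)
  zero_mem' := by simp
  add_mem' := by
    intro x y hx hy
    simp only [coe_insert, Set.mem_insert_iff, mem_coe] at *
    rcases hx with rfl | hx
    · simpa using hy
    rcases hy with rfl | hy
    · simpa using Or.inr hx
    rcases eq_or_ne x y with rfl | hxy
    · simpa using hi x hx
    · exact Or.inr (hP x hx y hy hxy)
  neg_mem' := by
    intro x hx
    simp only [coe_insert, Set.mem_insert_iff, mem_coe] at *
    rcases hx with rfl | hx
    · simp
    · simpa using hv x hx

lemma aux_card3_zero (A : Finset G) (hP : ∀ a ∈ A, ∀ b ∈ A, a ≠ b → a + b ∈ A)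
    (hc : A.card = 3) (h0 : (0:G) ∈ A) : ∃ b, A = {b, 0, -b} := by
  classical
  have hec : (A.erase 0).card = 2 := by rw [card_erase_of_mem h0, hc]
  obtain ⟨x, y, hxy, he⟩ := card_eq_two.1 hec
  have hx : x ∈ A := mem_of_mem_erase (he ▸ mem_insert_self x {y})
  have hy : y ∈ A := mem_of_mem_erase (he ▸ mem_insert_of_mem (mem_singleton_self y))
  have hx0 : x ≠ 0 := ne_of_mem_erase (he ▸ mem_insert_self x {y})
  have hy0 : y ≠ 0 := ne_of_mem_erase (he ▸ mem_insert_of_mem (mem_singleton_self y))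
  have hA : A = {0, x, y} := by
    rw [← insert_erase h0, he]
  have hsum := hP x hx y hy hxy
  rw [hA] at hsum
  simp only [mem_insert, mem_singleton] at hsum
  rcases hsum with h | h | h
  · refine ⟨x, ?_⟩
    have hyx : y = -x := (neg_eq_of_add_eq_zero_right h).symm
    rw [hA, hyx]
    ext z
    simp only [mem_insert, mem_singleton]
    tauto
  · exact absurd (by rwa [add_eq_left] at h) hy0
  · exact absurd (by rwa [add_eq_right] at h) hx0

lemma aux_final (A : Finset G) (hP : ∀ a ∈ A, ∀ b ∈ A, a ≠ b → a + b ∈ A)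
    (hi : ∀ a ∈ A, a + a ∈ insert (0:G) A) (hv : ∀ a ∈ A, -a ∈ insert (0:G) A) :
    (∃ H : AddSubgroup G, ∀ x, x ∈ A ↔ x ∈ H) ∨
    (∃ H : AddSubgroup G, (∀ x ∈ H, 2 • x = 0) ∧ ∀ x, x ∈ A ↔ (x ∈ H ∧ x ≠ 0)) := by
  set S := mkS A hP hi hv with hS
  have hmem : ∀ x, x ∈ S ↔ x ∈ insert (0:G) A := by
    intro x
    rw [hS]
    constructor
    · intro h; exact h
    · intro h; exact h
  by_cases h0 : (0:G) ∈ A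
  · left
    refine ⟨S, fun x => ?_⟩
    rw [hmem]
    simp only [mem_insert]
    constructor
    · intro h; exact Or.inr h
    · rintro (rfl | h) <;> [exact h0; exact h]
  · right
    refine ⟨S, ?_, fun x => ?_⟩
    · intro x hx
      rw [hmem, mem_insert] at hx
      rcases hx with rfl | hx
      · simp
      · have hvx := hv x hx
        rw [mem_insert] at hvx
        rcases hvx with hvx | hvx
        · exfalso; apply h0
          have : x = 0 := by simpa using hvx.symm ▸ (neg_eq_zero.1 hvx)
          rwa [← this]
        · rcases eq_or_ne x (-x) with he | hne
          · rw [two_nsmul]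
            nth_rewrite 2 [he]
            simp
          · exfalso; apply h0
            have := hP x hx (-x) hvx (by simpa using hne)
            simpa using this
    · constructor
      · intro hx
        refine ⟨(hmem x).2 (mem_insert_of_mem hx), ?_⟩
        rintro rfl; exact h0 hx
      · rintro ⟨hx, hxne⟩
        rw [hmem, mem_insert] at hx
        rcases hx with rfl | hx
        · exact absurd rfl hxne
        · exact hx


end Aux

/-- Characterisation of `φ(A) = 1` (Proposition 1.1). -/
theorem phi_eq_one_classification {G : Type*} [AddCommGroup G] [DecidableEq G]
    (A : Finset G) (hphi : phi A = 1) :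
    (∃ H : AddSubgroup G, ∀ x, x ∈ A ↔ x ∈ H) ∨
    (∃ H : AddSubgroup G, (∀ x ∈ H, 2 • x = 0) ∧ ∀ x, x ∈ A ↔ (x ∈ H ∧ x ≠ 0)) ∨
    (∃ b : G, A = {b}) ∨
    (∃ b : G, A = {b, 0}) ∨
    (∃ b : G, A = {b, 0, -b}) := by
  classical
  -- A is nonempty
  have hne : A.Nonempty := by
    rcases A.eq_empty_or_nonempty with rfl | h
    · exfalso; rw [phi] at hphi; simp at hphi
    · exact h
  -- the basic closure property
  have hP : ∀ a ∈ A, ∀ b ∈ A, a ≠ b → a + b ∈ A := by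
    intro a ha b hb hab
    by_contra hab'
    have hmem : ({a, b} : Finset G) ∈
        (A.powerset).filter (fun B => ∀ b₁ ∈ B, ∀ b₂ ∈ B, b₁ ≠ b₂ → b₁ + b₂ ∉ A) := by
      rw [mem_filter, mem_powerset]
      refine ⟨insert_subset_iff.2 ⟨ha, singleton_subset_iff.2 hb⟩, ?_⟩
      intro b₁ h₁ b₂ h₂ h₁₂
      simp only [mem_insert, mem_singleton] at h₁ h₂
      rcases h₁ with rfl | rfl <;> rcases h₂ with rfl | rfl
      · exact absurd rfl h₁₂
      · exact hab'
      · rwa [add_comm]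
      · exact absurd rfl h₁₂
    have hle : ({a, b} : Finset G).card ≤ phi A := le_sup hmem
    rw [card_insert_of_notMem (by simpa using hab), card_singleton, hphi] at hle
    omega
  -- case by cardinality
  rcases lt_or_ge A.card 4 with hc4 | hc4
  · have hc1 : 1 ≤ A.card := card_pos.2 hne
    interval_cases hAc : A.card
    · -- card 1
      obtain ⟨b, hb⟩ := card_eq_one.1 hAc
      exact Or.inr (Or.inr (Or.inl ⟨b, hb⟩))
    · -- card 2
      obtain ⟨a, b, hab, hA⟩ := card_eq_two.1 hAc
      subst hA
      have h1 : a ∈ ({a, b} : Finset G) := by simp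
      have h2 : b ∈ ({a, b} : Finset G) := by simp
      have := hP a h1 b h2 hab
      simp only [mem_insert, mem_singleton] at this
      rcases this with h | h
      · have hb0 : b = 0 := by rwa [add_eq_left] at h
        exact Or.inr (Or.inr (Or.inr (Or.inl ⟨a, by rw [hb0]⟩)))
      · have ha0 : a = 0 := by rwa [add_eq_right] at h
        exact Or.inr (Or.inr (Or.inr (Or.inl ⟨b, by rw [ha0, pair_comm]⟩)))
    · -- card 3
      have hneg : ∀ x ∈ A, -x ∈ A := by
        intro x hx
        have hmx := (aux_missing A hP hx).1
        rw [hAc] at hmx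
        rwa [show ((2:ℤ) - (3:ℕ)) = -1 by norm_num, neg_one_zsmul] at hmx
      by_cases h0 : (0:G) ∈ A
      · exact Or.inr (Or.inr (Or.inr (Or.inr (aux_card3_zero A hP hAc h0))))
      · have hiv : ∀ a ∈ A, a + a ∈ insert (0:G) A ∧ -a ∈ insert (0:G) A := by
          intro x hx
          refine ⟨?_, mem_insert_of_mem (hneg x hx)⟩
          have hxx : x + x = 0 := by
            rcases eq_or_ne (-x) x with he | hne
            · nth_rewrite 2 [← he]; simp
            · exfalso; apply h0
              have := hP x hx (-x) (hneg x hx) (fun h => hne h.symm)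
              simpa using this
          rw [hxx]
          exact mem_insert_self _ _
        rcases aux_final A hP (fun a ha => (hiv a ha).1) (fun a ha => (hiv a ha).2) with h | h
        · exact Or.inl h
        · exact Or.inr (Or.inl h)
  · -- card ≥ 4
    by_cases hX : ∃ a ∈ A, ∀ x ∈ A, x ∈ zmultiples a
    · obtain ⟨a, ha, hsub⟩ := hX
      exact Or.inl ⟨zmultiples a, aux_X A hP hc4 ha (aux_finord A hP hc4 ha) hsub⟩
    · push_neg at hX
      have hiv : ∀ a ∈ A, a + a ∈ insert (0:G) A ∧ -a ∈ insert (0:G) A := by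
        intro a ha
        have hfa := aux_finord A hP hc4 ha
        have hm0 : 0 < addOrderOf a := hfa.addOrderOf_pos
        rcases lt_or_ge (addOrderOf a) 3 with hm | hm
        · interval_cases hma : addOrderOf a
          · -- order 1 : a = 0
            have ha0 : a = 0 := AddMonoid.addOrderOf_eq_one_iff.1 hma
            subst ha0
            constructor <;> simp
          · -- order 2 : 2a = 0, -a = a
            have h2 : a + a = 0 := by
              have := addOrderOf_nsmul_eq_zero a
              rw [hma, two_nsmul] at this
              exact this
            refine ⟨by rw [h2]; exact mem_insert_self _ _, ?_⟩
            have : -a = a := by rw [neg_eq_iff_add_eq_zero, h2]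
            rw [this]
            exact mem_insert_of_mem ha
        · obtain ⟨b, hb, hbK⟩ := hX a ha
          have hall := aux_Y A hP ha hfa hm hb (aux_finord A hP hc4 hb) hbK
          constructor
          · have := hall 2
            rw [two_zsmul] at this
            exact mem_insert_of_mem this
          · have := hall (-1)
            rw [neg_one_zsmul] at this
            exact mem_insert_of_mem this
      rcases aux_final A hP (fun a ha => (hiv a ha).1) (fun a ha => (hiv a ha).2) with h | h
      · exact Or.inl h
      · exact Or.inr (Or.inl h)
end

section
/- For n ≥ 4, let G = ℤ/2ⁿℤ and A = { (4m+1)·2ʲ mod 2ⁿ : m ∈ ℤ, 0 ≤ j ≤ n−2 }. Then φ(A) ≤ 4; that is, for any five distinct elements a₁,…,a₅ of A there exist i ≠ j with aᵢ + aⱼ ∈ A. -/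
lemma two_pow_zero_in_zmod (n k : ℕ) (h : n ≤ k) : ((2 : ZMod (2 ^ n))) ^ k = 0 := by
  have h2 : ((2 ^ k : ℕ) : ZMod (2 ^ n)) = 0 := by
    have : NeZero (2 ^ n) := ⟨pow_ne_zero n two_ne_zero⟩
    rw [ZMod.natCast_eq_zero_iff]
    exact pow_dvd_pow 2 h
  push_cast at h2
  exact h2

theorem counterexample_phi_le_four (n : ℕ) (hn : 4 ≤ n)
    (A : Finset (ZMod (2 ^ n)))
    (hA : ∀ x : ZMod (2 ^ n),
      x ∈ A ↔ ∃ m : ℤ, ∃ j : ℕ, j ≤ n - 2 ∧ x = ((4 * m + 1 : ℤ) : ZMod (2 ^ n)) * 2 ^ j) :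
    phi A ≤ 4 := by
  unfold phi
  rw [Finset.sup_le_iff]
  intro B hB
  simp only [Finset.mem_filter, Finset.mem_powerset] at hB
  obtain ⟨hBA, hsum⟩ := hB
  by_contra hcard
  push_neg at hcard
  -- abstract membership lemmas
  have K1 : ∀ (m₁ m₂ : ℤ) (j₁ j₂ : ℕ), j₁ ≤ n - 2 → j₁ + 2 ≤ j₂ →
      ((4 * m₁ + 1 : ℤ) : ZMod (2 ^ n)) * 2 ^ j₁
        + ((4 * m₂ + 1 : ℤ) : ZMod (2 ^ n)) * 2 ^ j₂ ∈ A := by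
    intro m₁ m₂ j₁ j₂ hj1 hjj
    rw [hA]
    obtain ⟨d, rfl⟩ : ∃ d, j₂ = j₁ + 2 + d := ⟨j₂ - j₁ - 2, by omega⟩
    refine ⟨m₁ + (4 * m₂ + 1) * 2 ^ d, j₁, hj1, ?_⟩
    push_cast
    ring
  have K2 : ∀ (m₂ t : ℤ) (j₁ : ℕ), j₁ + 1 ≤ n - 2 →
      ((4 * (2 * t + m₂) + 1 : ℤ) : ZMod (2 ^ n)) * 2 ^ j₁
        + ((4 * m₂ + 1 : ℤ) : ZMod (2 ^ n)) * 2 ^ j₁ ∈ A := by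
    intro m₂ t j₁ hj1
    rw [hA]
    refine ⟨t + m₂, j₁ + 1, hj1, ?_⟩
    push_cast
    ring
  have K3 : ∀ (m₂ t : ℤ) (j₁ : ℕ), n ≤ j₁ + 3 →
      ((4 * (2 * t + m₂) + 1 : ℤ) : ZMod (2 ^ n)) * 2 ^ j₁
        = ((4 * m₂ + 1 : ℤ) : ZMod (2 ^ n)) * 2 ^ j₁ := by
    intro m₂ t j₁ hj1
    have hz : ((2 : ZMod (2 ^ n))) ^ (j₁ + 3) = 0 := two_pow_zero_in_zmod n _ hj1
    have key : ((4 * (2 * t + m₂) + 1 : ℤ) : ZMod (2 ^ n)) * 2 ^ j₁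
        = ((4 * m₂ + 1 : ℤ) : ZMod (2 ^ n)) * 2 ^ j₁
          + (t : ZMod (2 ^ n)) * 2 ^ (j₁ + 3) := by
      push_cast
      ring
    rw [key, hz, mul_zero, add_zero]
  -- choose parameters m, j for each element of B
  have hch : ∀ b : ZMod (2 ^ n), ∃ m : ℤ, ∃ j : ℕ,
      b ∈ B → (j ≤ n - 2 ∧ b = ((4 * m + 1 : ℤ) : ZMod (2 ^ n)) * 2 ^ j) := by
    intro b
    by_cases hb : b ∈ B
    · obtain ⟨m, j, hj, he⟩ := (hA b).mp (hBA hb)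
      exact ⟨m, j, fun _ => ⟨hj, he⟩⟩
    · exact ⟨0, 0, fun h => absurd h hb⟩
  choose m j hmj using hch
  have hjle : ∀ b ∈ B, j b ≤ n - 2 := fun b hb => (hmj b hb).1
  have heq : ∀ b ∈ B, b = ((4 * m b + 1 : ℤ) : ZMod (2 ^ n)) * 2 ^ (j b) :=
    fun b hb => (hmj b hb).2
  -- two elements with valuations differing by at least 2 sum into A
  have L1 : ∀ b₁ ∈ B, ∀ b₂ ∈ B, b₁ ≠ b₂ → j b₁ + 2 ≤ j b₂ → False := by
    intro b₁ h₁ b₂ h₂ hne hjj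
    apply hsum b₁ h₁ b₂ h₂ hne
    have e1 := heq b₁ h₁
    have e2 := heq b₂ h₂
    have hmem := K1 (m b₁) (m b₂) (j b₁) (j b₂) (hjle b₁ h₁) hjj
    rw [← e1, ← e2] at hmem
    exact hmem
  -- two distinct elements with equal j and equal parity of m give a contradiction
  have L2 : ∀ b₁ ∈ B, ∀ b₂ ∈ B, b₁ ≠ b₂ → j b₁ = j b₂ →
      ((m b₁ : ZMod 2) = (m b₂ : ZMod 2)) → False := by
    intro b₁ h₁ b₂ h₂ hne hjj hmm
    have hpar : (2 : ℤ) ∣ (m b₁ - m b₂) := by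
      have h0 : ((m b₁ - m b₂ : ℤ) : ZMod 2) = 0 := by
        push_cast
        rw [hmm]; ring
      rwa [ZMod.intCast_zmod_eq_zero_iff_dvd] at h0
    obtain ⟨t, ht⟩ := hpar
    have hm1 : m b₁ = 2 * t + m b₂ := by omega
    have e1 : b₁ = ((4 * (2 * t + m b₂) + 1 : ℤ) : ZMod (2 ^ n)) * 2 ^ (j b₂) := by
      rw [heq b₁ h₁, hm1, hjj]
    have e2 := heq b₂ h₂
    by_cases hj : j b₁ ≤ n - 3
    · apply hsum b₁ h₁ b₂ h₂ hne
      have hmem := K2 (m b₂) t (j b₂) (by omega)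
      rw [← e1, ← e2] at hmem
      exact hmem
    · apply hne
      rw [e2, e1]
      exact K3 (m b₂) t (j b₂) (by have := hjle b₁ h₁; omega)
  -- minimal valuation
  have hne5 : B.Nonempty := Finset.card_pos.mp (by omega)
  have hJne : (B.image j).Nonempty := hne5.image j
  set j₀ := (B.image j).min' hJne with hj₀
  obtain ⟨b₀, hb₀, hjb₀⟩ := Finset.mem_image.mp ((B.image j).min'_mem hJne)
  have hmin : ∀ b ∈ B, j₀ ≤ j b := fun b hb =>
    (B.image j).min'_le _ (Finset.mem_image_of_mem j hb)
  have hmax : ∀ b ∈ B, j b ≤ j₀ + 1 := by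
    intro b hb
    by_contra hc
    push_neg at hc
    have hne : b₀ ≠ b := by
      intro h
      rw [h] at hjb₀
      omega
    exact L1 b₀ hb₀ b hb hne (by omega)
  -- pigeonhole
  have hinj : Set.InjOn (fun b => (j b, (m b : ZMod 2))) B := by
    intro b₁ h₁ b₂ h₂ hfe
    by_contra hne
    exact L2 b₁ h₁ b₂ h₂ hne (congrArg Prod.fst hfe) (congrArg Prod.snd hfe)
  have hmaps : ∀ b ∈ B, (j b, (m b : ZMod 2)) ∈
      (({j₀, j₀ + 1} : Finset ℕ) ×ˢ (Finset.univ : Finset (ZMod 2))) := by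
    intro b hb
    simp only [Finset.mem_product, Finset.mem_insert, Finset.mem_singleton, Finset.mem_univ,
      and_true]
    have h1 := hmin b hb
    have h2 := hmax b hb
    omega
  have hle := Finset.card_le_card_of_injOn _ hmaps hinj
  have hc4 : (({j₀, j₀ + 1} : Finset ℕ) ×ˢ (Finset.univ : Finset (ZMod 2))).card = 4 := by
    rw [Finset.card_product]
    rw [Finset.card_insert_of_notMem (by simp), Finset.card_singleton]
    simp
  omega
end

section
/- For n ≥ 4, let G = ℤ/2ⁿℤ and A = { (4m+1)·2ʲ mod 2ⁿ : m ∈ ℤ, 0 ≤ j ≤ n−2 }. Then the set {1, 2, 5, 10} (mod 2ⁿ) is a sum-avoiding subset of A of size 4, hence φ(A) ≥ 4. -/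
lemma no_rep_aux (m : ℤ) (j : ℕ) (c : ℤ)
    (hc : c = 3 ∨ c = 6 ∨ c = 7 ∨ c = 11 ∨ c = 12 ∨ c = 15) :
    ¬ (16 : ℤ) ∣ (4 * m + 1) * 2 ^ j - c := by
  match j with
  | 0 => simp only [pow_zero, mul_one]; omega
  | 1 => simp only [pow_one]; omega
  | 2 => norm_num; omega
  | (k + 3) =>
    have h2 : (2 : ℤ) ^ (k + 3) = 8 * 2 ^ k := by ring
    rw [h2, show (4 * m + 1) * (8 * 2 ^ k) = 8 * ((4 * m + 1) * 2 ^ k) by ring]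
    set t := (4 * m + 1) * 2 ^ k with ht
    omega

theorem counterexample_phi_ge_four (n : ℕ) (hn : 4 ≤ n)
    (A : Finset (ZMod (2 ^ n)))
    (hA : ∀ x : ZMod (2 ^ n),
      x ∈ A ↔ ∃ m : ℤ, ∃ j : ℕ, j ≤ n - 2 ∧ x = ((4 * m + 1 : ℤ) : ZMod (2 ^ n)) * 2 ^ j) :
    ({1, 2, 5, 10} : Finset (ZMod (2 ^ n))) ⊆ A ∧
    (∀ b₁ ∈ ({1, 2, 5, 10} : Finset (ZMod (2 ^ n))),
      ∀ b₂ ∈ ({1, 2, 5, 10} : Finset (ZMod (2 ^ n))), b₁ ≠ b₂ → b₁ + b₂ ∉ A) ∧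
    ({1, 2, 5, 10} : Finset (ZMod (2 ^ n))).card = 4 ∧
    4 ≤ phi A := by
  have h16 : (16 : ℤ) ∣ (2 : ℤ) ^ n := by
    have : (2 : ℤ) ^ n = 2 ^ 4 * 2 ^ (n - 4) := by
      rw [← pow_add]; congr 1; omega
    rw [this]; norm_num
  have h16n : (16 : ℕ) ≤ 2 ^ n := by
    calc (16 : ℕ) = 2 ^ 4 := by norm_num
    _ ≤ 2 ^ n := Nat.pow_le_pow_right (by norm_num) hn
  -- membership facts
  have hmem : ∀ x : ZMod (2 ^ n), x ∈ A ↔ ∃ m : ℤ, ∃ j : ℕ, j ≤ n - 2 ∧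
      x = ((4 * m + 1 : ℤ) : ZMod (2 ^ n)) * 2 ^ j := hA
  have hsub : ({1, 2, 5, 10} : Finset (ZMod (2 ^ n))) ⊆ A := by
    intro x hx
    simp only [Finset.mem_insert, Finset.mem_singleton] at hx
    rw [hA]
    rcases hx with h | h | h | h
    · exact ⟨0, 0, by omega, by rw [h]; push_cast; ring⟩
    · exact ⟨0, 1, by omega, by rw [h]; push_cast; ring⟩
    · exact ⟨1, 0, by omega, by rw [h]; push_cast; ring⟩
    · exact ⟨1, 1, by omega, by rw [h]; push_cast; ring⟩
  -- a value c ∈ {3,6,7,11,12,15} is not in A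
  have hnot : ∀ c : ℤ, (c = 3 ∨ c = 6 ∨ c = 7 ∨ c = 11 ∨ c = 12 ∨ c = 15) →
      ((c : ZMod (2 ^ n)) ∉ A) := by
    intro c hc hmemA
    rw [hA] at hmemA
    obtain ⟨m, j, hj, hx⟩ := hmemA
    have : (((4 * m + 1) * 2 ^ j : ℤ) : ZMod (2 ^ n)) = ((c : ℤ) : ZMod (2 ^ n)) := by
      rw [hx]
      push_cast
      ring
    rw [ZMod.intCast_eq_intCast_iff] at this
    have hdvd : ((2 ^ n : ℕ) : ℤ) ∣ (4 * m + 1) * 2 ^ j - c := Int.ModEq.dvd this.symm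
    have hdvd16 : (16 : ℤ) ∣ (4 * m + 1) * 2 ^ j - c := by
      refine dvd_trans ?_ hdvd
      push_cast
      exact h16
    exact no_rep_aux m j c hc hdvd16
  -- distinctness
  have hinj : ∀ a b : ℕ, a < 16 → b < 16 → ((a : ZMod (2 ^ n)) = b) → a = b := by
    intro a b ha hb h
    rw [ZMod.natCast_eq_natCast_iff] at h
    have := Nat.ModEq.eq_of_lt_of_lt h (by omega) (by omega)
    exact this
  have h12 : (1 : ZMod (2 ^ n)) ≠ 2 := fun h => by
    have := hinj 1 2 (by norm_num) (by norm_num) (by exact_mod_cast h); omega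
  have h15 : (1 : ZMod (2 ^ n)) ≠ 5 := fun h => by
    have := hinj 1 5 (by norm_num) (by norm_num) (by exact_mod_cast h); omega
  have h110 : (1 : ZMod (2 ^ n)) ≠ 10 := fun h => by
    have := hinj 1 10 (by norm_num) (by norm_num) (by exact_mod_cast h); omega
  have h25 : (2 : ZMod (2 ^ n)) ≠ 5 := fun h => by
    have := hinj 2 5 (by norm_num) (by norm_num) (by exact_mod_cast h); omega
  have h210 : (2 : ZMod (2 ^ n)) ≠ 10 := fun h => by
    have := hinj 2 10 (by norm_num) (by norm_num) (by exact_mod_cast h); omega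
  have h510 : (5 : ZMod (2 ^ n)) ≠ 10 := fun h => by
    have := hinj 5 10 (by norm_num) (by norm_num) (by exact_mod_cast h); omega
  have H : ∀ c : ℤ, (c = 3 ∨ c = 6 ∨ c = 7 ∨ c = 11 ∨ c = 12 ∨ c = 15) →
      ∀ y : ZMod (2 ^ n), y = ((c : ℤ) : ZMod (2 ^ n)) → y ∉ A := by
    intro c hc y hy
    rw [hy]; exact hnot c hc
  have havoid : ∀ b₁ ∈ ({1, 2, 5, 10} : Finset (ZMod (2 ^ n))),
      ∀ b₂ ∈ ({1, 2, 5, 10} : Finset (ZMod (2 ^ n))), b₁ ≠ b₂ → b₁ + b₂ ∉ A := by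
    intro b₁ hb₁ b₂ hb₂ hne
    simp only [Finset.mem_insert, Finset.mem_singleton] at hb₁ hb₂
    rcases hb₁ with h1 | h1 | h1 | h1 <;> rcases hb₂ with h2 | h2 | h2 | h2 <;> subst h1 <;> subst h2
    · exact absurd rfl hne
    · exact H 3 (by norm_num) _ (by push_cast; norm_num)
    · exact H 6 (by norm_num) _ (by push_cast; norm_num)
    · exact H 11 (by norm_num) _ (by push_cast; norm_num)
    · exact H 3 (by norm_num) _ (by push_cast; norm_num)
    · exact absurd rfl hne
    · exact H 7 (by norm_num) _ (by push_cast; norm_num)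
    · exact H 12 (by norm_num) _ (by push_cast; norm_num)
    · exact H 6 (by norm_num) _ (by push_cast; norm_num)
    · exact H 7 (by norm_num) _ (by push_cast; norm_num)
    · exact absurd rfl hne
    · exact H 15 (by norm_num) _ (by push_cast; norm_num)
    · exact H 11 (by norm_num) _ (by push_cast; norm_num)
    · exact H 12 (by norm_num) _ (by push_cast; norm_num)
    · exact H 15 (by norm_num) _ (by push_cast; norm_num)
    · exact absurd rfl hne
  have hcard : ({1, 2, 5, 10} : Finset (ZMod (2 ^ n))).card = 4 := by
    rw [Finset.card_insert_of_notMem (by simp [h12, h15, h110]),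
        Finset.card_insert_of_notMem (by simp [h25, h210]),
        Finset.card_insert_of_notMem (by simp [h510]),
        Finset.card_singleton]
  refine ⟨hsub, havoid, hcard, ?_⟩
  calc 4 = ({1, 2, 5, 10} : Finset (ZMod (2 ^ n))).card := hcard.symm
  _ ≤ phi A := by
    unfold phi
    apply Finset.le_sup
    simp only [Finset.mem_filter, Finset.mem_powerset]
    exact ⟨hsub, havoid⟩
end

section
/- Let k ≥ 4 be such that p = 2^{k−1} − 1 is prime, let H be a finite additive group, let G = (ℤ/pℤ) × H, and let A = A₀ × H where A₀ = {2ⁱ mod p : 0 ≤ i ≤ k−2}. Then for any k distinct elements a₁, …, a_k ∈ A, there exist i < j with aᵢ + aⱼ ∈ A; i.e., φ(A) ≤ k−1. -/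
lemma cast_succ_self_aux (m n : ℕ) (h : n = m + 1) : ((n : ℕ) : ZMod m) = 1 := by
  subst h
  push_cast [ZMod.natCast_self]
  ring

theorem mersenne_counterexample_phi (k : ℕ) (hk : 4 ≤ k)
    (hp : Nat.Prime (2 ^ (k - 1) - 1))
    (H : Type*) [AddCommGroup H] [Fintype H] [DecidableEq H]
    (A₀ : Finset (ZMod (2 ^ (k - 1) - 1)))
    (hA₀ : ∀ x : ZMod (2 ^ (k - 1) - 1), x ∈ A₀ ↔ ∃ i : ℕ, i ≤ k - 2 ∧ x = 2 ^ i)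
    (A : Finset (ZMod (2 ^ (k - 1) - 1) × H))
    (hA : ∀ x : ZMod (2 ^ (k - 1) - 1) × H, x ∈ A ↔ x.1 ∈ A₀) :
    phi A ≤ k - 1 := by
  have hnat : 2 ^ (k - 1) = (2 ^ (k - 1) - 1) + 1 := by
    have h1 : 1 ≤ 2 ^ (k - 1) := Nat.one_le_two_pow
    omega
  have hone : (2 : ZMod (2 ^ (k - 1) - 1)) ^ (k - 1) = 1 := by
    have h := cast_succ_self_aux (2 ^ (k - 1) - 1) (2 ^ (k - 1)) hnat
    push_cast at h
    simpa using h
  apply Finset.sup_le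
  intro B hB
  simp only [Finset.mem_filter, Finset.mem_powerset] at hB
  obtain ⟨hBA, hfree⟩ := hB
  by_contra hcard
  push_neg at hcard
  have hA₀card : A₀.card ≤ k - 1 := by
    have hsub : A₀ ⊆ (Finset.range (k - 1)).image (fun i => (2 : ZMod (2 ^ (k - 1) - 1)) ^ i) := by
      intro x hx
      rw [hA₀] at hx
      obtain ⟨i, hi, rfl⟩ := hx
      exact Finset.mem_image.mpr ⟨i, Finset.mem_range.mpr (by omega), rfl⟩
    calc A₀.card ≤ _ := Finset.card_le_card hsub
      _ ≤ (Finset.range (k - 1)).card := Finset.card_image_le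
      _ = k - 1 := Finset.card_range _
  have hmap : ∀ b ∈ B, b.1 ∈ A₀ := fun b hb => (hA b).mp (hBA hb)
  obtain ⟨b₁, h₁, b₂, h₂, hne, heq⟩ :=
    Finset.exists_ne_map_eq_of_card_lt_of_maps_to (by omega : A₀.card < B.card) hmap
  apply hfree b₁ h₁ b₂ h₂ hne
  rw [hA, hA₀]
  obtain ⟨i, hi, hxi⟩ := (hA₀ b₁.1).mp (hmap b₁ h₁)
  have hsum : (b₁ + b₂).1 = (2 : ZMod (2 ^ (k - 1) - 1)) ^ (i + 1) := by
    have : (b₁ + b₂).1 = b₁.1 + b₂.1 := rfl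
    rw [this, ← heq, hxi, pow_succ]
    ring
  by_cases hcase : i + 1 ≤ k - 2
  · exact ⟨i + 1, hcase, hsum⟩
  · refine ⟨0, by omega, ?_⟩
    have hik : i = k - 2 := by omega
    have : i + 1 = k - 1 := by omega
    rw [hsum, this, hone, pow_zero]
end

section
/- Let H be a finite additive group of odd order and B ⊆ H a Sidon set. Then φ(H \ B) < 4; that is, for any four distinct elements a₁, a₂, a₃, a₄ of H \ B, at least one of the six pairwise sums aᵢ + aⱼ (i < j) lies in H \ B. -/
theorem sidon_complement_phi_lt_four {H : Type*} [AddCommGroup H] [Fintype H] [DecidableEq H]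
    (hodd : Odd (Fintype.card H))
    (B : Finset H)
    (hSidon : ∀ b₁ ∈ B, ∀ b₂ ∈ B, ∀ b₃ ∈ B, ∀ b₄ ∈ B,
      b₁ + b₂ = b₃ + b₄ → (b₁ = b₃ ∧ b₂ = b₄) ∨ (b₁ = b₄ ∧ b₂ = b₃)) :
    phi ((Finset.univ : Finset H) \ B) < 4 := by
  unfold phi
  rw [Finset.sup_lt_iff (by norm_num)]
  intro C hC
  simp only [Finset.mem_filter, Finset.mem_powerset] at hC
  obtain ⟨hsub, hsum⟩ := hC
  by_contra h
  push_neg at h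
  -- extract 4 distinct elements
  obtain ⟨a₁, h1⟩ := Finset.card_pos.mp (show 0 < C.card by omega)
  have e1 : 3 ≤ (C.erase a₁).card := by rw [Finset.card_erase_of_mem h1]; omega
  obtain ⟨a₂, h2⟩ := Finset.card_pos.mp (by omega : 0 < (C.erase a₁).card)
  have e2 : 2 ≤ ((C.erase a₁).erase a₂).card := by rw [Finset.card_erase_of_mem h2]; omega
  obtain ⟨a₃, h3⟩ := Finset.card_pos.mp (by omega : 0 < ((C.erase a₁).erase a₂).card)
  have e3 : 1 ≤ (((C.erase a₁).erase a₂).erase a₃).card := by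
    rw [Finset.card_erase_of_mem h3]; omega
  obtain ⟨a₄, h4⟩ := Finset.card_pos.mp (by omega : 0 < (((C.erase a₁).erase a₂).erase a₃).card)
  have m2 : a₂ ∈ C := Finset.mem_of_mem_erase h2
  have m3 : a₃ ∈ C := Finset.mem_of_mem_erase (Finset.mem_of_mem_erase h3)
  have m4 : a₄ ∈ C := Finset.mem_of_mem_erase (Finset.mem_of_mem_erase (Finset.mem_of_mem_erase h4))
  have n12 : a₂ ≠ a₁ := Finset.ne_of_mem_erase h2
  have n13 : a₃ ≠ a₁ := Finset.ne_of_mem_erase (Finset.mem_of_mem_erase h3)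
  have n23 : a₃ ≠ a₂ := Finset.ne_of_mem_erase h3
  have n14 : a₄ ≠ a₁ :=
    Finset.ne_of_mem_erase (Finset.mem_of_mem_erase (Finset.mem_of_mem_erase h4))
  have n24 : a₄ ≠ a₂ := Finset.ne_of_mem_erase (Finset.mem_of_mem_erase h4)
  have n34 : a₄ ≠ a₃ := Finset.ne_of_mem_erase h4
  -- all pairwise sums lie in B
  have sumB : ∀ x ∈ C, ∀ y ∈ C, x ≠ y → x + y ∈ B := by
    intro x hx y hy hxy
    have := hsum x hx y hy hxy
    simpa using this
  have s12 : a₁ + a₂ ∈ B := sumB a₁ h1 a₂ m2 (Ne.symm n12)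
  have s34 : a₃ + a₄ ∈ B := sumB a₃ m3 a₄ m4 (Ne.symm n34)
  have s13 : a₁ + a₃ ∈ B := sumB a₁ h1 a₃ m3 (Ne.symm n13)
  have s24 : a₂ + a₄ ∈ B := sumB a₂ m2 a₄ m4 (Ne.symm n24)
  have key : (a₁ + a₂) + (a₃ + a₄) = (a₁ + a₃) + (a₂ + a₄) := by abel
  rcases hSidon _ s12 _ s34 _ s13 _ s24 key with ⟨he, _⟩ | ⟨he, _⟩
  · exact n23 (add_left_cancel he).symm
  · exact n14 (add_right_cancel (he.trans (add_comm a₂ a₄))).symm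
end

section
/- Let H be a finite abelian group of odd order, A ⊆ H, and ε₁ > 0, and suppose (1/|H|) Σ_{x∈H} |1_A(x) − 1_A(2x)| ≤ 4ε₁. Then for every character ξ of H and every natural number j, |1̂_A(2ʲξ) − 1̂_A(ξ)| ≤ 4jε₁. -/
/-- The real indicator function of a finite set. -/
def indic {H : Type*} [DecidableEq H] (A : Finset H) (x : H) : ℝ :=
  if x ∈ A then 1 else 0

/-- The Fourier coefficient of the indicator of `A` at the character `x ↦ ξ(c • x)`
(i.e. at the "dilate" `cξ` of `ξ`): `(1/|H|) ∑_x 1_A(x) ξ(-(c • x))`. -/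
noncomputable def dilFourier {H : Type*} [AddCommGroup H] [Fintype H] [DecidableEq H]
    (A : Finset H) (ξ : AddChar H ℂ) (c : ℕ) : ℂ :=
  (1 / (Fintype.card H : ℂ)) * ∑ x : H, (indic A x : ℂ) * ξ (-(c • x))

theorem iterated_doubling_bound {H : Type*} [AddCommGroup H] [Fintype H] [DecidableEq H]
    (hodd : Odd (Fintype.card H))
    (A : Finset H) (ε₁ : ℝ) (hε₁ : 0 < ε₁)
    (hdouble : (1 / (Fintype.card H : ℝ)) *
        ∑ x : H, |indic A x - indic A (2 • x)| ≤ 4 * ε₁) :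
    ∀ (ξ : AddChar H ℂ) (j : ℕ),
      ‖dilFourier A ξ (2 ^ j) - dilFourier A ξ 1‖ ≤ 4 * j * ε₁ := by
  intro ξ j
  have hinj : Function.Injective (fun x : H => 2 • x) := by
    intro x y h
    simp only at h
    have h2 : 2 • (x - y) = 0 := by rw [smul_sub, h, sub_self]
    have hord : addOrderOf (x - y) ∣ 2 := addOrderOf_dvd_of_nsmul_eq_zero h2
    have hcard : addOrderOf (x - y) ∣ Fintype.card H := addOrderOf_dvd_card
    have hd : addOrderOf (x - y) ∣ Nat.gcd 2 (Fintype.card H) := Nat.dvd_gcd hord hcard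
    have hg : Nat.gcd 2 (Fintype.card H) = 1 := Nat.coprime_two_left.mpr hodd
    rw [hg, Nat.dvd_one] at hd
    have h0 : x - y = 0 := by
      have := addOrderOf_nsmul_eq_zero (x - y)
      rwa [hd, one_nsmul] at this
    rwa [sub_eq_zero] at h0
  set e : H ≃ H := Equiv.ofBijective _ ((Finite.injective_iff_bijective).mp hinj) with he
  have hecoe : ∀ x : H, e x = 2 • x := fun x => rfl
  set N := Fintype.card H
  have hN : (0 : ℝ) < N := Nat.cast_pos.mpr Fintype.card_pos
  have key : ∀ c : ℕ, ‖dilFourier A ξ (2 * c) - dilFourier A ξ c‖ ≤ 4 * ε₁ := by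
    intro c
    have hre : dilFourier A ξ c
        = (1 / (N : ℂ)) * ∑ x : H, (indic A (2 • x) : ℂ) * ξ (-((2 * c) • x)) := by
      unfold dilFourier
      congr 1
      rw [← Equiv.sum_comp e (fun y => (indic A y : ℂ) * ξ (-(c • y)))]
      refine Finset.sum_congr rfl fun x _ => ?_
      rw [hecoe]
      congr 2
      rw [smul_smul, mul_comm]
    have hdiff : dilFourier A ξ (2 * c) - dilFourier A ξ c
        = (1 / (N : ℂ)) * ∑ x : H,
            ((indic A x : ℂ) - (indic A (2 • x) : ℂ)) * ξ (-((2 * c) • x)) := by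
      rw [hre]
      unfold dilFourier
      rw [← mul_sub, ← Finset.sum_sub_distrib]
      congr 1
      exact Finset.sum_congr rfl fun x _ => by ring
    rw [hdiff]
    rw [norm_mul]
    have h1 : ‖(1 / (N : ℂ))‖ = 1 / (N : ℝ) := by
      rw [norm_div, norm_one, Complex.norm_natCast]
    rw [h1]
    calc (1 / (N : ℝ)) * ‖∑ x : H,
            ((indic A x : ℂ) - (indic A (2 • x) : ℂ)) * ξ (-((2 * c) • x))‖
        ≤ (1 / (N : ℝ)) * ∑ x : H, |indic A x - indic A (2 • x)| := by
          refine mul_le_mul_of_nonneg_left ?_ (by positivity)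
          refine (norm_sum_le _ _).trans ?_
          refine Finset.sum_le_sum fun x _ => ?_
          rw [norm_mul]
          have hξ : ‖ξ (-((2 * c) • x))‖ = 1 := AddChar.norm_apply ξ _
          rw [hξ, mul_one, ← Complex.ofReal_sub, Complex.norm_real, Real.norm_eq_abs]
      _ ≤ 4 * ε₁ := hdouble
  induction j with
  | zero => simp
  | succ j ih =>
    have h2 : (2 : ℕ) ^ (j + 1) = 2 * 2 ^ j := by ring
    calc ‖dilFourier A ξ (2 ^ (j + 1)) - dilFourier A ξ 1‖
        ≤ ‖dilFourier A ξ (2 ^ (j + 1)) - dilFourier A ξ (2 ^ j)‖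
          + ‖dilFourier A ξ (2 ^ j) - dilFourier A ξ 1‖ := by
          have := norm_sub_le_norm_sub_add_norm_sub (dilFourier A ξ (2 ^ (j + 1))) (dilFourier A ξ (2 ^ j))
            (dilFourier A ξ 1)
          exact this
      _ ≤ 4 * ε₁ + 4 * j * ε₁ := by
          refine add_le_add ?_ ih
          rw [h2]; exact key (2 ^ j)
      _ = 4 * (j + 1 : ℕ) * ε₁ := by push_cast; ring
end

section
/- Let A be a finite subset of an additive group G with φ(A) = 1 such that 2a ∉ A for every nonzero a ∈ A, and suppose 2b = 0 for all b ∈ A. Then either A = {0}, or A ∪ {0} is a 2-torsion subgroup of G not containing any element of A equal to 0. -/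
theorem two_torsion_case {G : Type*} [AddCommGroup G] [DecidableEq G]
    (A : Finset G) (hphi : phi A = 1)
    (h2a : ∀ a ∈ A, a ≠ 0 → 2 • a ∉ A)
    (htor : ∀ b ∈ A, 2 • b = 0) :
    A = {0} ∨
    (∃ H : AddSubgroup G, (∀ x ∈ H, 2 • x = 0) ∧
      (H : Set G) = ↑A ∪ {0} ∧ (0 : G) ∉ A) := by
  have hA : A.Nonempty := by
    by_contra h
    rw [Finset.not_nonempty_iff_eq_empty] at h
    subst h
    simp [phi] at hphi
  have hsum : ∀ a ∈ A, ∀ b ∈ A, a ≠ b → a + b ∈ A := by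
    intro a ha b hb hab
    by_contra hab'
    have hmem : ({a, b} : Finset G) ∈ (A.powerset).filter
        (fun B => ∀ b₁ ∈ B, ∀ b₂ ∈ B, b₁ ≠ b₂ → b₁ + b₂ ∉ A) := by
      simp only [Finset.mem_filter, Finset.mem_powerset]
      refine ⟨?_, ?_⟩
      · intro x hx
        simp only [Finset.mem_insert, Finset.mem_singleton] at hx
        rcases hx with rfl | rfl <;> assumption
      · intro b₁ h₁ b₂ h₂ hne
        simp only [Finset.mem_insert, Finset.mem_singleton] at h₁ h₂
        rcases h₁ with rfl | rfl <;> rcases h₂ with rfl | rfl <;>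
          simp_all [add_comm]
    have h2 : 2 ≤ phi A := by
      have hle := Finset.le_sup (f := Finset.card) hmem
      have hcard : ({a, b} : Finset G).card = 2 := by
        rw [Finset.card_insert_of_notMem (by simpa using hab)]
        simp
      unfold phi
      omega
    omega
  by_cases h0 : ∃ a ∈ A, a ≠ 0
  · right
    obtain ⟨a, ha, ha0⟩ := h0
    have h0A : (0 : G) ∉ A := by
      intro h
      have := h2a a ha ha0
      rw [htor a ha] at this
      exact this h
    have hself : ∀ x ∈ A, -x = x := by
      intro x hx
      have := htor x hx
      rw [two_nsmul] at this
      exact neg_eq_of_add_eq_zero_left this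
    refine ⟨{ carrier := ↑A ∪ {0},
              add_mem' := ?_,
              zero_mem' := Or.inr rfl,
              neg_mem' := ?_ }, ?_, rfl, h0A⟩
    · rintro x y (hx | hx) (hy | hy)
      · by_cases hxy : x = y
        · subst hxy
          right
          have := htor x hx
          rw [two_nsmul] at this
          exact this
        · exact Or.inl (hsum x hx y hy hxy)
      · simp only [Set.mem_singleton_iff] at hy
        subst hy; rw [add_zero]; exact Or.inl hx
      · simp only [Set.mem_singleton_iff] at hx
        subst hx; rw [zero_add]; exact Or.inl hy
      · simp only [Set.mem_singleton_iff] at hx hy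
        subst hx; subst hy; right; simp
    · rintro x (hx | hx)
      · rw [hself x hx]; exact Or.inl hx
      · simp only [Set.mem_singleton_iff] at hx
        subst hx; right; simp
    · rintro x (hx | hx)
      · exact htor x hx
      · simp only [Set.mem_singleton_iff] at hx
        subst hx; simp
  · left
    push_neg at h0
    obtain ⟨a, ha⟩ := hA
    have := h0 a ha
    subst this
    ext x
    simp only [Finset.mem_singleton]
    constructor
    · intro hx; exact h0 x hx
    · rintro rfl; exact ha
end
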